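/- Let C > 0 and φ ∈ C²(ℝ^d) with −C·I_d ≤ D²φ(x) < 0 (negative definite) for all x. Define g(x, μ) := C|x|² + ∫ φ(x − y) dμ(y). Then g is displacement monotone: for all square-integrable ℝ^d-valued random variables X¹, X², E[(D_x g(X¹, law(X¹)) − D_x g(X², law(X²))) · (X¹ − X²)] ≥ 0. -/

import Mathlib

open MeasureTheory Real Filter
open scoped RealInnerProductSpace Topology

noncomputable section

abbrev E (d : ℕ) := EuclideanSpace ℝ (Fin d)

/-- A probability measure on `E d` with finite second moment. -/
def FiniteSecondMoment {d : ℕ} (μ : Measure (E d)) : Prop :=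
  Integrable (fun x => ‖x‖ ^ 2) μ

/-- The 2-Wasserstein distance, defined through couplings. -/
def W2 {d : ℕ} (μ ν : Measure (E d)) : ℝ :=
  sInf { r | ∃ γ : Measure (E d × E d), IsProbabilityMeasure γ ∧
    γ.map Prod.fst = μ ∧ γ.map Prod.snd = ν ∧
    r = (∫ p, ‖p.1 - p.2‖ ^ 2 ∂γ) ^ (1 / 2 : ℝ) }

/-- The 1-Wasserstein distance, defined through couplings. -/
def W1 {d : ℕ} (μ ν : Measure (E d)) : ℝ :=
  sInf { r | ∃ γ : Measure (E d × E d), IsProbabilityMeasure γ ∧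
    γ.map Prod.fst = μ ∧ γ.map Prod.snd = ν ∧
    r = ∫ p, ‖p.1 - p.2‖ ∂γ }
/-- Symmetry of the second derivative (via the gradient). -/
lemma hess_symm_aux {d : ℕ} {φ : E d → ℝ} {Dφ : E d → E d} {D2φ : E d → (E d →L[ℝ] E d)}
    (hφgrad : ∀ x, HasGradientAt φ (Dφ x) x)
    (hφhess : ∀ x, HasFDerivAt Dφ (D2φ x) x) (x v w : E d) :
    ⟪D2φ x v, w⟫ = ⟪D2φ x w, v⟫ := by
  set L : E d →L[ℝ] (E d →L[ℝ] ℝ) :=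
    (InnerProductSpace.toDual ℝ (E d)).toContinuousLinearEquiv.toContinuousLinearMap with hL
  have hf : ∀ y, HasFDerivAt φ (L (Dφ y)) y := fun y =>
    hasGradientAt_iff_hasFDerivAt.1 (hφgrad y)
  have hx : HasFDerivAt (fun y => L (Dφ y)) (L.comp (D2φ x)) x :=
    L.hasFDerivAt.comp x (hφhess x)
  have h := second_derivative_symmetric hf hx v w
  simpa [hL, InnerProductSpace.toDual_apply_apply] using h

/-- The operator-norm bound on the hessian coming from the two quadratic-form bounds. -/
lemma hess_norm_aux {d : ℕ} {C : ℝ} (hC : 0 < C) {φ : E d → ℝ} {Dφ : E d → E d}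
    {D2φ : E d → (E d →L[ℝ] E d)}
    (hφgrad : ∀ x, HasGradientAt φ (Dφ x) x)
    (hφhess : ∀ x, HasFDerivAt Dφ (D2φ x) x)
    (hhessLB : ∀ x v, -(C * ‖v‖ ^ 2) ≤ ⟪D2φ x v, v⟫)
    (hhessUB : ∀ x v, ⟪D2φ x v, v⟫ ≤ 0) (x : E d) : ‖D2φ x‖ ≤ C := by
  have sym := hess_symm_aux hφgrad hφhess x
  -- polarization: 4⟪Av,w⟫ = Q(v+w) - Q(v-w)
  have hpol : ∀ v w : E d, 4 * ⟪D2φ x v, w⟫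
      = ⟪D2φ x (v + w), v + w⟫ - ⟪D2φ x (v - w), v - w⟫ := by
    intro v w
    have h := sym v w
    simp only [map_add, map_sub, inner_add_left, inner_add_right, inner_sub_left,
      inner_sub_right]
    linarith
  have hbil : ∀ v w : E d, |⟪D2φ x v, w⟫| ≤ C * ‖v‖ * ‖w‖ := by
    have hone : ∀ v w : E d, ‖v‖ ≤ 1 → ‖w‖ ≤ 1 → |⟪D2φ x v, w⟫| ≤ C := by
      intro v w hv hw
      have h1 : -(C * ‖v + w‖ ^ 2) ≤ ⟪D2φ x (v + w), v + w⟫ := hhessLB x _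
      have h2 : ⟪D2φ x (v + w), v + w⟫ ≤ 0 := hhessUB x _
      have h3 : -(C * ‖v - w‖ ^ 2) ≤ ⟪D2φ x (v - w), v - w⟫ := hhessLB x _
      have h4 : ⟪D2φ x (v - w), v - w⟫ ≤ 0 := hhessUB x _
      have e1 : ‖v + w‖ ^ 2 ≤ 4 := by
        have := norm_add_le v w
        nlinarith [norm_nonneg (v + w), norm_nonneg v, norm_nonneg w]
      have e2 : ‖v - w‖ ^ 2 ≤ 4 := by
        have := norm_sub_le v w
        nlinarith [norm_nonneg (v - w), norm_nonneg v, norm_nonneg w]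
      have hp := hpol v w
      rw [abs_le]
      constructor <;> nlinarith
    intro v w
    rcases eq_or_ne v 0 with rfl | hv
    · simp
    rcases eq_or_ne w 0 with rfl | hw
    · simp
    have hv' : (0:ℝ) < ‖v‖ := norm_pos_iff.2 hv
    have hw' : (0:ℝ) < ‖w‖ := norm_pos_iff.2 hw
    have key := hone (‖v‖⁻¹ • v) (‖w‖⁻¹ • w)
      (by simp [norm_smul, abs_of_pos hv', inv_mul_cancel₀ hv'.ne'])
      (by simp [norm_smul, abs_of_pos hw', inv_mul_cancel₀ hw'.ne'])
    rw [ContinuousLinearMap.map_smul, real_inner_smul_left, real_inner_smul_right, abs_mul, abs_mul,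
      abs_of_pos (inv_pos.2 hv'), abs_of_pos (inv_pos.2 hw')] at key
    calc |⟪D2φ x v, w⟫| = ‖v‖ * ‖w‖ * (‖v‖⁻¹ * (‖w‖⁻¹ * |⟪D2φ x v, w⟫|)) := by
          field_simp
      _ ≤ ‖v‖ * ‖w‖ * C := by
          apply mul_le_mul_of_nonneg_left key (by positivity)
      _ = C * ‖v‖ * ‖w‖ := by ring
  refine ContinuousLinearMap.opNorm_le_bound _ hC.le (fun v => ?_)
  rcases eq_or_ne (D2φ x v) 0 with h0 | h0
  · rw [h0]; simp; positivity
  have hpos : (0:ℝ) < ‖D2φ x v‖ := norm_pos_iff.2 h0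
  have := hbil v (D2φ x v)
  rw [real_inner_self_eq_norm_sq] at this
  have h2 : ‖D2φ x v‖ ^ 2 ≤ C * ‖v‖ * ‖D2φ x v‖ := by
    calc ‖D2φ x v‖ ^ 2 = |‖D2φ x v‖ ^ 2| := (abs_of_nonneg (by positivity)).symm
      _ = |⟪D2φ x v, D2φ x v⟫| := by rw [real_inner_self_eq_norm_sq]
      _ ≤ C * ‖v‖ * ‖D2φ x v‖ := hbil v _
  nlinarith

/-- Let `C > 0` and `φ ∈ C²(ℝ^d)` with `-C·I ≤ D²φ ≤ 0` in the sense
of quadratic forms. Then `g(x,μ) := C|x|² + (φ ⋆ μ)(x)` is displacement monotone. -/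
theorem quadratic_plus_concave_convolution_displacement_monotone
    (d : ℕ) (C : ℝ) (hC : 0 < C) (φ : E d → ℝ) (Dφ : E d → E d)
    (D2φ : E d → (E d →L[ℝ] E d))
    (hφgrad : ∀ x, HasGradientAt φ (Dφ x) x)
    (hφhess : ∀ x, HasFDerivAt Dφ (D2φ x) x)
    (hhessLB : ∀ x v, -(C * ‖v‖ ^ 2) ≤ ⟪D2φ x v, v⟫)
    (hhessUB : ∀ x v, ⟪D2φ x v, v⟫ ≤ 0)
    (g : E d → Measure (E d) → ℝ)
    (hg : ∀ x μ, g x μ = C * ‖x‖ ^ 2 + ∫ y, φ (x - y) ∂μ)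
    (Dg : E d → Measure (E d) → E d)
    (hDg : ∀ x μ, Dg x μ = (2 * C) • x + ∫ y, Dφ (x - y) ∂μ) :
    ∀ (Ω : Type) (_ : MeasurableSpace Ω) (P : Measure Ω),
      IsProbabilityMeasure P →
      ∀ X₁ X₂ : Ω → E d, Measurable X₁ → Measurable X₂ →
        MemLp X₁ 2 P → MemLp X₂ 2 P →
        0 ≤ ∫ ω, ⟪Dg (X₁ ω) (P.map X₁) - Dg (X₂ ω) (P.map X₂), X₁ ω - X₂ ω⟫ ∂P := by
  intro Ω _ P hP X₁ X₂ hX₁m hX₂m hX₁2 hX₂2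
  -- Lipschitz bound for Dφ
  have hA : ∀ x, ‖D2φ x‖ ≤ C := hess_norm_aux hC hφgrad hφhess hhessLB hhessUB
  have hlip : ∀ a b : E d, ‖Dφ a - Dφ b‖ ≤ C * ‖a - b‖ := by
    intro a b
    exact convex_univ.norm_image_sub_le_of_norm_hasFDerivWithin_le
      (fun x _ => (hφhess x).hasFDerivWithinAt) (fun x _ => hA x)
      (Set.mem_univ b) (Set.mem_univ a)
  have hgrow : ∀ a : E d, ‖Dφ a‖ ≤ ‖Dφ 0‖ + C * ‖a‖ := by
    intro a
    have := hlip a 0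
    simp only [sub_zero] at this
    have h' := norm_sub_norm_le (Dφ a) (Dφ 0)
    linarith
  have hDφc : Continuous Dφ :=
    continuous_iff_continuousAt.2 fun x => (hφhess x).continuousAt
  set u : Ω → E d := fun ω => X₁ ω - X₂ ω with hu_def
  have hu2 : MemLp u 2 P := hX₁2.sub hX₂2
  have hu1 : Integrable u P := hu2.integrable one_le_two
  have hunorm : Integrable (fun ω => ‖u ω‖) P := hu1.norm
  have husq : Integrable (fun ω => ‖u ω‖ ^ 2) P := by
    have h := hu2.integrable_norm_rpow (by norm_num) (by norm_num)
    simp only [ENNReal.toReal_ofNat] at h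
    refine h.congr (Filter.Eventually.of_forall fun ω => ?_)
    show ‖u ω‖ ^ (2:ℝ) = ‖u ω‖ ^ (2:ℕ)
    rw [← Real.rpow_natCast ‖u ω‖ 2]; norm_num
  have hX₁1 : Integrable X₁ P := hX₁2.integrable one_le_two
  have hX₂1 : Integrable X₂ P := hX₂2.integrable one_le_two
  set m := ∫ ω, ‖u ω‖ ∂P with hm_def
  set S := ∫ ω, ‖u ω‖ ^ 2 ∂P with hS_def
  have hm0 : 0 ≤ m := integral_nonneg fun ω => norm_nonneg _
  -- Cauchy–Schwarz: m² ≤ S, via nonnegativity of variance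
  have hmS : m ^ 2 ≤ S := by
    have hvar : 0 ≤ ∫ ω, (‖u ω‖ - m) ^ 2 ∂P := integral_nonneg fun ω => sq_nonneg _
    have hi1 : Integrable (fun ω => ‖u ω‖ ^ 2 - 2 * m * ‖u ω‖) P :=
      husq.sub (hunorm.const_mul (2 * m))
    have hexp : ∫ ω, (‖u ω‖ - m) ^ 2 ∂P = S - 2 * m * m + m ^ 2 := by
      have e1 : ∫ ω, (‖u ω‖ - m) ^ 2 ∂P
          = ∫ ω, (‖u ω‖ ^ 2 - 2 * m * ‖u ω‖ + m ^ 2) ∂P := by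
        congr 1; funext ω; ring
      rw [e1, integral_add hi1 (integrable_const _),
        integral_sub husq (hunorm.const_mul (2 * m)), integral_const_mul, integral_const]
      simp [hS_def, hm_def]
    nlinarith
  -- integrability of the shifted convolution integrand
  have hconv_int : ∀ (X : Ω → E d), Measurable X → Integrable X P → ∀ x : E d,
      Integrable (fun ω' => Dφ (x - X ω')) P := by
    intro X hX hXi x
    refine Integrable.mono' (((hXi.norm.const_mul C)).add (integrable_const (‖Dφ 0‖ + C * ‖x‖)))
      ((hDφc.measurable.comp (measurable_const.sub hX)).aestronglyMeasurable)
      (Filter.Eventually.of_forall fun ω' => ?_)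
    have h1 := hgrow (x - X ω')
    have h2 : ‖x - X ω'‖ ≤ ‖x‖ + ‖X ω'‖ := norm_sub_le _ _
    have : C * ‖x - X ω'‖ ≤ C * (‖x‖ + ‖X ω'‖) :=
      mul_le_mul_of_nonneg_left h2 hC.le
    show ‖Dφ (x - X ω')‖ ≤ C * ‖X ω'‖ + (‖Dφ 0‖ + C * ‖x‖)
    linarith [this, h1]
  -- identify the convolution against the pushforward measure
  have hmap : ∀ (X : Ω → E d), Measurable X → ∀ x : E d,
      (∫ y, Dφ (x - y) ∂(P.map X)) = ∫ ω', Dφ (x - X ω') ∂P := by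
    intro X hX x
    exact integral_map hX.aemeasurable
      ((hDφc.comp (continuous_const.sub continuous_id)).aestronglyMeasurable)
  -- key pointwise lower bound
  have key : ∀ ω, C * ‖u ω‖ ^ 2 - C * m * ‖u ω‖
      ≤ ⟪Dg (X₁ ω) (P.map X₁) - Dg (X₂ ω) (P.map X₂), X₁ ω - X₂ ω⟫ := by
    intro ω
    rw [hDg, hDg, hmap X₁ hX₁m, hmap X₂ hX₂m]
    set a := X₁ ω with ha
    set b := X₂ ω with hb
    have hia := hconv_int X₁ hX₁m hX₁1 a
    have hib := hconv_int X₂ hX₂m hX₂1 b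
    set D : E d := (∫ ω', Dφ (a - X₁ ω') ∂P) - ∫ ω', Dφ (b - X₂ ω') ∂P with hD
    have hDnorm : ‖D‖ ≤ C * (‖u ω‖ + m) := by
      have hsub : D = ∫ ω', (Dφ (a - X₁ ω') - Dφ (b - X₂ ω')) ∂P := by
        rw [hD, ← integral_sub hia hib]
      rw [hsub]
      calc ‖∫ ω', (Dφ (a - X₁ ω') - Dφ (b - X₂ ω')) ∂P‖
          ≤ ∫ ω', ‖Dφ (a - X₁ ω') - Dφ (b - X₂ ω')‖ ∂P := norm_integral_le_integral_norm _
        _ ≤ ∫ ω', C * (‖u ω‖ + ‖u ω'‖) ∂P := by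
            refine integral_mono (hia.sub hib).norm
              (((integrable_const ‖u ω‖).add hunorm).const_mul C |>.congr
                (Filter.Eventually.of_forall fun ω' => by simp only [Pi.add_apply]; try ring)) (fun ω' => ?_)
            have h1 : ‖Dφ (a - X₁ ω') - Dφ (b - X₂ ω')‖
                ≤ C * ‖(a - X₁ ω') - (b - X₂ ω')‖ := hlip _ _
            have h2 : (a - X₁ ω') - (b - X₂ ω') = u ω - u ω' := by
              simp only [hu_def, ha, hb]; abel
            rw [h2] at h1
            have h3 : ‖u ω - u ω'‖ ≤ ‖u ω‖ + ‖u ω'‖ := norm_sub_le _ _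
            calc ‖Dφ (a - X₁ ω') - Dφ (b - X₂ ω')‖ ≤ C * ‖u ω - u ω'‖ := h1
              _ ≤ C * (‖u ω‖ + ‖u ω'‖) := mul_le_mul_of_nonneg_left h3 hC.le
        _ = C * (‖u ω‖ + m) := by
            rw [integral_const_mul, integral_add (integrable_const _) hunorm,
              integral_const]
            simp [hm_def]
    have hsplit : ((2 * C) • a + ∫ ω', Dφ (a - X₁ ω') ∂P)
        - ((2 * C) • b + ∫ ω', Dφ (b - X₂ ω') ∂P) = (2 * C) • (a - b) + D := by
      rw [hD, smul_sub]; abel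
    rw [hsplit]
    have hab : a - b = u ω := rfl
    rw [hab, inner_add_left, real_inner_smul_left, real_inner_self_eq_norm_sq]
    have hinner : -(‖D‖ * ‖u ω‖) ≤ ⟪D, u ω⟫ := by
      have := abs_real_inner_le_norm D (u ω)
      rw [abs_le] at this
      exact this.1
    nlinarith [mul_le_mul_of_nonneg_right hDnorm (norm_nonneg (u ω)), norm_nonneg (u ω),
      norm_nonneg D]
  by_cases hf : Integrable
      (fun ω => ⟪Dg (X₁ ω) (P.map X₁) - Dg (X₂ ω) (P.map X₂), X₁ ω - X₂ ω⟫) P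
  · have hg0 : Integrable (fun ω => C * ‖u ω‖ ^ 2 - C * m * ‖u ω‖) P :=
      (husq.const_mul C).sub (hunorm.const_mul (C * m))
    have hle : ∫ ω, (C * ‖u ω‖ ^ 2 - C * m * ‖u ω‖) ∂P
        ≤ ∫ ω, ⟪Dg (X₁ ω) (P.map X₁) - Dg (X₂ ω) (P.map X₂), X₁ ω - X₂ ω⟫ ∂P :=
      integral_mono hg0 hf key
    have hval : ∫ ω, (C * ‖u ω‖ ^ 2 - C * m * ‖u ω‖) ∂P = C * S - C * m * m := by
      rw [integral_sub (husq.const_mul C) (hunorm.const_mul (C * m)),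
        integral_const_mul C, integral_const_mul (C*m)]
    have : 0 ≤ C * S - C * m * m := by nlinarith
    linarith [hle, hval ▸ hle]
  · rw [integral_undef hf]
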